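/- Let {X_α} be an inverse system of schemes indexed by a directed poset, with affine surjective transition morphisms ρ_{α,β} : X_α → X_β. If every X_α is a nonempty quasi-compact scheme, then the limit X = lim X_α is nonempty and each canonical projection ρ_α : X → X_α is surjective. -/

import Mathlib

open AlgebraicGeometry CategoryTheory CategoryTheory.Limits

universe u

namespace Statement1Aux

instance {α : Type*} [Preorder α] {X Y : αᵒᵖ} : Subsingleton (X ⟶ Y) :=
  ⟨fun f g => Quiver.Hom.unop_inj (Subsingleton.elim _ _)⟩

variable {J : Type u} [Preorder J] [IsDirected J (· ≤ ·)]

/-- The elements above a fixed `j`. -/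
abbrev Above (j : J) : Type u := {i : J // j ≤ i}

instance (j : J) : Nonempty (Above j) := ⟨⟨j, le_refl j⟩⟩

instance (j : J) : IsDirected (Above j) (· ≤ ·) := by
  constructor
  rintro ⟨a, ha⟩ ⟨b, hb⟩
  obtain ⟨m, hma, hmb⟩ := directed_of (· ≤ ·) a b
  exact ⟨⟨m, ha.trans hma⟩, hma, hmb⟩

/-- The inclusion functor of `Above j` into `J`. -/
def incl (j : J) : Above j ⥤ J :=
  Monotone.functor (f := (Subtype.val : Above j → J)) (fun _ _ h => h)

/-- Opposite of the inclusion. -/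
def ι (j : J) : (Above j)ᵒᵖ ⥤ Jᵒᵖ := (incl j).op

instance initial_ι (j : J) : (ι j).Initial := by
  apply Functor.initial_of_exists_of_isCofiltered
  · intro d
    obtain ⟨m, hm1, hm2⟩ := directed_of (· ≤ ·) j d.unop
    exact ⟨Opposite.op ⟨m, hm1⟩, ⟨(homOfLE hm2).op⟩⟩
  · intro d c s s'
    exact ⟨c, 𝟙 c, by rw [Subsingleton.elim s s']⟩

variable (F : Jᵒᵖ ⥤ AlgebraicGeometry.Scheme.{u}) {j : J}

/-- The transition morphism to the base. -/
def toBase (i : Above j) : F.obj (Opposite.op i.1) ⟶ F.obj (Opposite.op j) :=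
  F.map (homOfLE i.2).op

lemma map_eq {a b : Jᵒᵖ} (f g : a ⟶ b) : F.map f = F.map g := by
  rw [Subsingleton.elim f g]

variable (x : F.obj (Opposite.op j))

/-- The system of fibers over `x`. -/
noncomputable def G : (Above j)ᵒᵖ ⥤ AlgebraicGeometry.Scheme.{u} where
  obj i := pullback (toBase F i.unop)
    ((F.obj (Opposite.op j)).fromSpecResidueField x)
  map {a b} f := pullback.map _ _ _ _
      (F.map ((incl j).map f.unop).op) (𝟙 _) (𝟙 _)
      (by rw [Category.comp_id, toBase, toBase]; erw [← F.map_comp]; exact map_eq F _ _)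
      ((Category.comp_id _).trans (Category.id_comp _).symm)
  map_id a := by
    have h1 : F.map ((incl j).map (𝟙 a).unop).op
        = 𝟙 (F.obj (Opposite.op a.unop.1)) := by
      erw [map_eq F _ (𝟙 (Opposite.op a.unop.1)), F.map_id]
    apply pullback.hom_ext
    · simp only [pullback.lift_fst, Category.comp_id, Category.id_comp]; erw [h1, Category.comp_id]
    · simp only [pullback.lift_snd, Category.comp_id, Category.id_comp]
  map_comp {a b c} f g := by
    apply pullback.hom_ext
    · simp only [pullback.lift_fst, Category.assoc, pullback.lift_fst_assoc]
      erw [← F.map_comp]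
      exact congrArg _ (map_eq F _ _)
    · simp only [pullback.lift_snd, Category.assoc, pullback.lift_snd_assoc,
        Category.comp_id]

/-- The associated system of rings of global sections. -/
noncomputable def R : Above j ⥤ CommRingCat.{u} where
  obj i := Γ((G F x).obj (Opposite.op i), ⊤)
  map {a b} f := ((G F x).map f.op).appTop
  map_id a := by
    show ((G F x).map (𝟙 (Opposite.op a))).appTop = _
    rw [CategoryTheory.Functor.map_id, Scheme.Hom.id_appTop]
  map_comp {a b c} f g := by
    show ((G F x).map (g.op ≫ f.op)).appTop = _
    rw [CategoryTheory.Functor.map_comp, Scheme.Hom.comp_appTop]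

lemma nontrivial_gamma (X : AlgebraicGeometry.Scheme.{u}) (h : Nonempty X) :
    Nontrivial Γ(X, ⊤) := by
  obtain ⟨pt⟩ := h
  exact (X.presheaf.germ ⊤ pt trivial).hom.domain_nontrivial

end Statement1Aux

/-- Let `{X_α}` be an inverse system of schemes indexed by a directed
poset, with affine surjective transition morphisms.  If every `X_α` is a nonempty
quasi-compact scheme, then the limit `X = lim X_α` is nonempty and each canonical
projection `ρ_α : X → X_α` is surjective. -/
theorem statement1 {J : Type u} [Preorder J] [IsDirected J (· ≤ ·)] [Nonempty J]
    (F : Jᵒᵖ ⥤ AlgebraicGeometry.Scheme.{u})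
    (haff : ∀ {i j : Jᵒᵖ} (f : i ⟶ j), IsAffineHom (F.map f))
    (hsurj : ∀ {i j : Jᵒᵖ} (f : i ⟶ j), Function.Surjective (F.map f).base)
    (hne : ∀ j : Jᵒᵖ, Nonempty (F.obj j))
    (hqc : ∀ j : Jᵒᵖ, CompactSpace (F.obj j))
    (c : Cone F) (hc : IsLimit c) :
    Nonempty c.pt ∧ ∀ j : Jᵒᵖ, Function.Surjective (c.π.app j).base := by
  classical
  have key : ∀ (j0 : Jᵒᵖ) (x : F.obj j0), ∃ p : c.pt, (c.π.app j0).base p = x := by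
    intro j0 x
    obtain ⟨j⟩ := j0
    -- `x : F.obj (Opposite.op j)`
    open Statement1Aux in
    let Gf := Statement1Aux.G F (j := j) x
    let Rf := Statement1Aux.R F (j := j) x
    let K := Spec ((F.obj (Opposite.op j)).residueField x)
    let k : K ⟶ F.obj (Opposite.op j) := (F.obj (Opposite.op j)).fromSpecResidueField x
    -- instances on the fibers
    have hGaff : ∀ i : (Statement1Aux.Above j)ᵒᵖ, IsAffine (Gf.obj i) := fun i => by
      haveI := AlgebraicGeometry.isAffineHom_isStableUnderBaseChange
      haveI : IsAffineHom (pullback.snd (Statement1Aux.toBase F i.unop) k) :=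
        MorphismProperty.of_isPullback (P := @IsAffineHom) (IsPullback.of_hasPullback _ _) (haff _)
      exact @isAffine_of_isAffineHom _ _ (pullback.snd (Statement1Aux.toBase F i.unop) k) this _
    have hGne : ∀ i : (Statement1Aux.Above j)ᵒᵖ, Nonempty (Gf.obj i) := fun i => by
      haveI : AlgebraicGeometry.Surjective (Statement1Aux.toBase F i.unop) := ⟨hsurj _⟩
      have hs : AlgebraicGeometry.Surjective
          (pullback.snd (Statement1Aux.toBase F i.unop) k) :=
        MorphismProperty.of_isPullback (P := @AlgebraicGeometry.Surjective) (IsPullback.of_hasPullback _ _) this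
      have hK : Nonempty K := (inferInstance :
        Nonempty (PrimeSpectrum ((F.obj (Opposite.op j)).residueField x)))
      obtain ⟨q⟩ := hK
      obtain ⟨p, -⟩ := hs.surj q
      exact ⟨p⟩
    -- the colimit ring
    let A : CommRingCat.{u} := colimit Rf
    have hRnt : ∀ i : Statement1Aux.Above j, Nontrivial (Rf.obj i) := fun i =>
      Statement1Aux.nontrivial_gamma _ (hGne (Opposite.op i))
    have hAnt : Nontrivial A := by
      by_contra h
      rw [not_nontrivial_iff_subsingleton] at h
      obtain ⟨i₀⟩ : Nonempty (Statement1Aux.Above j) := inferInstance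
      have h1 : colimit.ι Rf i₀ (1 : Rf.obj i₀) = colimit.ι Rf i₀ (0 : Rf.obj i₀) :=
        Subsingleton.elim _ _
      obtain ⟨m, f, g, hm⟩ := Concrete.colimit_exists_of_rep_eq Rf _ _ h1
      rw [map_one, map_zero] at hm
      haveI := hRnt m
      exact one_ne_zero hm
    -- the cone with vertex `Spec A`
    let ψ : ∀ i : (Statement1Aux.Above j)ᵒᵖ, Spec A ⟶ Gf.obj i := fun i =>
      Spec.map (colimit.ι Rf i.unop) ≫ (@Scheme.isoSpec (Gf.obj i) (hGaff i)).inv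
    have hψ : ∀ {a b : (Statement1Aux.Above j)ᵒᵖ} (f : a ⟶ b),
        ψ a ≫ Gf.map f = ψ b := by
      intro a b f
      haveI := hGaff a; haveI := hGaff b
      show (Spec.map (colimit.ι Rf a.unop) ≫ (Gf.obj a).isoSpec.inv) ≫ Gf.map f = _
      erw [Category.assoc, ← Scheme.isoSpec_inv_naturality, ← Category.assoc,
        ← Spec.map_comp]
      have : (Gf.map f).appTop ≫ colimit.ι Rf a.unop = colimit.ι Rf b.unop :=
        colimit.w Rf f.unop
      erw [this]; rfl
    let coneG : Cone ((Statement1Aux.ι j) ⋙ F) :=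
      { pt := Spec A
        π :=
          { app := fun i => ψ i ≫ pullback.fst (Statement1Aux.toBase F i.unop) k
            naturality := by
              intro a b f
              have h2 : Gf.map f ≫ pullback.fst (Statement1Aux.toBase F b.unop) k
                  = pullback.fst (Statement1Aux.toBase F a.unop) k
                    ≫ (Statement1Aux.ι j ⋙ F).map f := pullback.lift_fst _ _ _
              show 𝟙 (Spec A) ≫ ψ b ≫ _ = (ψ a ≫ _) ≫ _
              erw [Category.id_comp, ← hψ f, Category.assoc, h2]
              exact (Category.assoc _ _ _).symm } }
    -- lift to the limit
    haveI : (Statement1Aux.ι j).Initial := Statement1Aux.initial_ι j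
    let hlim : IsLimit (c.whisker (Statement1Aux.ι j)) :=
      (Functor.Initial.isLimitWhiskerEquiv (Statement1Aux.ι j) c).symm hc
    let ℓ : Spec A ⟶ c.pt := hlim.lift coneG
    obtain ⟨pt⟩ : Nonempty ↥(Spec A) :=
      (inferInstance : Nonempty (PrimeSpectrum A))
    refine ⟨ℓ.base pt, ?_⟩
    let i₀ : (Statement1Aux.Above j)ᵒᵖ := Opposite.op ⟨j, le_refl j⟩
    have hfac : ℓ ≫ c.π.app (Opposite.op j) = ψ i₀ ≫ pullback.fst _ k :=
      hlim.fac coneG i₀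
    have hfst : pullback.fst (Statement1Aux.toBase F i₀.unop) k
        = pullback.snd (Statement1Aux.toBase F i₀.unop) k ≫ k := by
      have hid : Statement1Aux.toBase F i₀.unop = 𝟙 (F.obj (Opposite.op j)) := by
        rw [Statement1Aux.toBase, Statement1Aux.map_eq F _ (𝟙 (Opposite.op j)), F.map_id]
      rw [← Category.comp_id (pullback.fst (Statement1Aux.toBase F i₀.unop) k), ← hid,
        pullback.condition]
    show (ℓ ≫ c.π.app (Opposite.op j)).base pt = x
    rw [hfac, hfst]
    erw [Scheme.Hom.comp_apply, Scheme.Hom.comp_apply]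
    exact Scheme.fromSpecResidueField_apply x _
  constructor
  · obtain ⟨j0⟩ : Nonempty Jᵒᵖ := inferInstance
    obtain ⟨x⟩ := hne j0
    obtain ⟨p, _⟩ := key j0 x
    exact ⟨p⟩
  · intro j0 x
    exact key j0 x
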